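/- Let G be a finite subgroup of the homeomorphism group of the circle. Then there exists a self-homeomorphism h of the circle such that for every g ∈ G the conjugate map h ∘ g ∘ h⁻¹ is an isometry of the circle. -/

import Mathlib

open Complex Function Set Real

/-- A continuous real function taking values in `2π·ℤ` is constant. -/
lemma const_of_int {d : ℝ → ℝ} (hd : Continuous d)
    (h : ∀ t, ∃ m : ℤ, d t = m * (2 * π)) (t : ℝ) : d t = d 0 := by
  have hpi := Real.pi_pos
  have key : ∀ (s₁ s₂ : ℝ) (m₁ m₂ : ℤ), d s₁ = m₁ * (2 * π) → d s₂ = m₂ * (2 * π) →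
      m₁ < m₂ → False := by
    intro s₁ s₂ m₁ m₂ h₁ h₂ hlt
    have hcast : (m₁ : ℝ) + 1 ≤ (m₂ : ℝ) := by exact_mod_cast Int.add_one_le_of_lt hlt
    have hmem : (m₁ : ℝ) * (2 * π) + π ∈ Set.Icc (d s₁) (d s₂) := by
      rw [h₁, h₂]
      constructor
      · nlinarith
      · nlinarith
    obtain ⟨s, hs⟩ := intermediate_value_univ s₁ s₂ hd hmem
    obtain ⟨k, hk⟩ := h s
    rw [hs] at hk
    have : ((2 * m₁ + 1 : ℤ) : ℝ) * π = ((2 * k : ℤ) : ℝ) * π := by push_cast; nlinarith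
    have := mul_right_cancel₀ (ne_of_gt hpi) this
    have : (2 * m₁ + 1 : ℤ) = 2 * k := by exact_mod_cast this
    omega
  obtain ⟨m, hm⟩ := h t
  obtain ⟨m₀, hm₀⟩ := h 0
  rcases lt_trichotomy m m₀ with hlt | heq | hlt
  · exact absurd (key t 0 m m₀ hm hm₀ hlt) not_false
  · rw [hm, hm₀, heq]
  · exact absurd (key 0 t m₀ m hm₀ hm hlt) not_false

lemma circle_dist_eq (x y : Circle) : dist x y = dist (x : ℂ) (y : ℂ) := rfl

lemma uniformContinuous_circleExp : UniformContinuous Circle.exp := by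
  refine Metric.uniformContinuous_iff.2 ?_
  intro ε hε
  refine ⟨min 1 (ε / 2), by positivity, fun {a b} hab => ?_⟩
  have h1 : dist a b < 1 := lt_of_lt_of_le hab (min_le_left _ _)
  have h2 : dist a b < ε / 2 := lt_of_lt_of_le hab (min_le_right _ _)
  have key : dist (Circle.exp a) (Circle.exp b) ≤ 2 * dist a b := by
    rw [circle_dist_eq, Circle.coe_exp, Circle.coe_exp, Complex.dist_eq]
    have : Complex.exp (a * I) - Complex.exp (b * I) =
        Complex.exp (b * I) * (Complex.exp ((a - b) * I) - 1) := by
      rw [mul_sub, ← Complex.exp_add, mul_one]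
      ring_nf
    rw [this, norm_mul]
    have habs : ‖Complex.exp (b * I)‖ = 1 := by
      rw [Complex.norm_exp]
      simp
    rw [habs, one_mul]
    calc ‖Complex.exp ((a - b) * I) - 1‖ ≤ 2 * ‖((a : ℂ) - b) * I‖ := by
          apply Complex.norm_exp_sub_one_le
          rw [norm_mul, Complex.norm_I, mul_one]
          calc ‖((a : ℂ) - b)‖ = dist a b := by
                rw [← Complex.ofReal_sub, Complex.norm_real, Real.norm_eq_abs, Real.dist_eq]
            _ ≤ 1 := le_trans hab.le (min_le_left _ _)
      _ = 2 * dist a b := by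
          rw [norm_mul, Complex.norm_I, mul_one, ← Complex.ofReal_sub, Complex.norm_real,
            Real.norm_eq_abs, Real.dist_eq]
  linarith

section Lift

variable {f : ℝ → Circle}

/-- Existence of continuous lifts along `Circle.exp` for uniformly continuous maps. -/
lemma exists_lift (hf : UniformContinuous f) :
    ∃ F : ℝ → ℝ, Continuous F ∧ ∀ t, Circle.exp (F t) = f t := by
  -- choose a step δ such that f moves by < 1 on intervals of length δ
  obtain ⟨δ, hδ, hstep⟩ : ∃ δ : ℝ, 0 < δ ∧ ∀ s t : ℝ, |s - t| ≤ δ → dist (f s) (f t) < 1 := by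
    obtain ⟨δ₀, hδ₀, hδ₀p⟩ := Metric.uniformContinuous_iff.1 hf 1 one_pos
    exact ⟨δ₀ / 2, by positivity, fun s t hst => hδ₀p (by rw [Real.dist_eq]; linarith)⟩
  -- increments
  set a : ℤ → ℝ := fun k => Complex.arg ((f ((k + 1) * δ) / f (k * δ) : Circle) : ℂ) with ha
  -- partial sums
  set S : ℤ → ℝ := fun n =>
    match n with
    | Int.ofNat m => ∑ k ∈ Finset.range m, a k
    | Int.negSucc m => -∑ k ∈ Finset.range (m + 1), a (Int.negSucc k) with hS
  have hSstep : ∀ n : ℤ, S (n + 1) = S n + a n := by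
    intro n
    cases n with
    | ofNat m =>
      show S (Int.ofNat (m + 1)) = S (Int.ofNat m) + a (Int.ofNat m)
      show (∑ k ∈ Finset.range (m + 1), a k) = (∑ k ∈ Finset.range m, a k) + a (Int.ofNat m)
      rw [Finset.sum_range_succ]
      rfl
    | negSucc m =>
      cases m with
      | zero =>
        show (∑ k ∈ Finset.range 0, a k)
            = (-∑ k ∈ Finset.range 1, a (Int.negSucc k)) + a (Int.negSucc 0)
        simp
      | succ m' =>
        show (-∑ k ∈ Finset.range (m' + 1), a (Int.negSucc k))
            = (-∑ k ∈ Finset.range (m' + 2), a (Int.negSucc k)) + a (Int.negSucc (m' + 1))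
        conv_rhs => rw [Finset.sum_range_succ]
        ring
  -- exp of partial sums
  have hES : ∀ n : ℤ, f (n * δ) = f 0 * Circle.exp (S n) := by
    intro n
    induction n using Int.induction_on with
    | zero =>
      have : S 0 = 0 := rfl
      simp [this]
    | succ k ih =>
      have h1 : Circle.exp (S (k + 1)) = Circle.exp (S k) * Circle.exp (a k) := by
        rw [hSstep, Circle.exp_add]
      have hcast : ((k + 1 : ℤ) : ℝ) = ((k : ℤ) : ℝ) + 1 := by push_cast; ring
      rw [h1, ← mul_assoc, ← ih, ha, Circle.exp_arg, hcast]
      exact (mul_div_cancel _ _).symm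
    | pred k ih =>
      have h1 : S (-(k : ℤ)) = S (-(k : ℤ) - 1) + a (-(k : ℤ) - 1) := by
        have := hSstep (-(k : ℤ) - 1)
        rwa [show (-(k : ℤ) - 1 + 1 : ℤ) = -(k : ℤ) by ring] at this
      have hcast : ((-(k : ℤ) - 1 : ℤ) : ℝ) + 1 = ((-(k : ℤ) : ℤ) : ℝ) := by push_cast; ring
      have hexp_a : Circle.exp (a (-(k : ℤ) - 1))
          = f (((-(k : ℤ) : ℤ) : ℝ) * δ) / f (((-(k : ℤ) - 1 : ℤ) : ℝ) * δ) := by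
        rw [ha]
        show Circle.exp (Complex.arg ((f ((((-(k : ℤ) - 1 : ℤ) : ℝ) + 1) * δ)
            / f (((-(k : ℤ) - 1 : ℤ) : ℝ) * δ) : Circle) : ℂ)) = _
        rw [Circle.exp_arg, hcast]
      have h2 : Circle.exp (S (-(k : ℤ) - 1))
          = Circle.exp (S (-(k : ℤ))) / Circle.exp (a (-(k : ℤ) - 1)) := by
        rw [h1, Circle.exp_add]
        exact (mul_div_cancel_right _ _).symm
      rw [h2, ← mul_div_assoc, ← ih, hexp_a]
      exact (div_div_self' _ _).symm
  -- the lift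
  set A0 : ℝ := Complex.arg ((f 0 : Circle) : ℂ) with hA0
  set N : ℝ → ℤ := fun t => ⌊t / δ⌋ with hN
  have hNle : ∀ t : ℝ, (N t : ℝ) * δ ≤ t := by
    intro t
    rw [hN]
    exact (le_div_iff₀ hδ).mp (Int.floor_le (t / δ))
  have hNlt : ∀ t : ℝ, t < ((N t : ℝ) + 1) * δ := by
    intro t
    rw [hN]
    have := Int.lt_floor_add_one (t / δ)
    calc t = t / δ * δ := by field_simp
    _ < (↑⌊t / δ⌋ + 1) * δ := by
        apply mul_lt_mul_of_pos_right _ hδ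
        exact_mod_cast this
  have hNeq : ∀ (n : ℤ) (t : ℝ), (n : ℝ) * δ ≤ t → t < ((n : ℝ) + 1) * δ → N t = n := by
    intro n t h1 h2
    rw [hN]
    rw [Int.floor_eq_iff]
    constructor
    · exact (le_div_iff₀ hδ).mpr (by linarith)
    · rw [div_lt_iff₀ hδ]
      push_cast
      linarith
  set G : ℤ → ℝ → ℝ :=
    fun n t => A0 + S n + Complex.arg ((f t / f ((n : ℝ) * δ) : Circle) : ℂ) with hG
  set F : ℝ → ℝ := fun t => G (N t) t with hF
  have hlift : ∀ t, Circle.exp (F t) = f t := by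
    intro t
    rw [hF, hG]
    simp only []
    rw [Circle.exp_add, Circle.exp_add, Circle.exp_arg, Circle.exp_arg, ← hES]
    exact mul_div_cancel _ _
  have hGcont : ∀ (n : ℤ) (t : ℝ), |t - (n : ℝ) * δ| ≤ δ → ContinuousAt (G n) t := by
    intro n t ht
    have hz : ((f t / f ((n : ℝ) * δ) : Circle) : ℂ) ∈ Complex.slitPlane := by
      have hd : dist (f t) (f ((n : ℝ) * δ)) < 1 := hstep _ _ ht
      set z : ℂ := ((f t / f ((n : ℝ) * δ) : Circle) : ℂ) with hzdef
      have habs : ‖z - 1‖ < 1 := by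
        have hz1 : z - 1 = ((f t : ℂ) - (f ((n : ℝ) * δ) : ℂ)) / (f ((n : ℝ) * δ) : ℂ) := by
          rw [hzdef]
          push_cast
          field_simp
        rw [hz1, norm_div, Circle.norm_coe, div_one]
        rwa [circle_dist_eq, Complex.dist_eq] at hd
      rw [Complex.mem_slitPlane_iff]
      left
      have h1 : Complex.normSq (z - 1) < 1 := by
        rw [← Complex.sq_norm]
        nlinarith [norm_nonneg (z - 1)]
      have h2 : Complex.normSq z = 1 := by
        rw [← Complex.sq_norm, hzdef, Circle.norm_coe]
        norm_num
      rw [Complex.normSq_apply] at h1 h2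
      have hre : (z - 1).re = z.re - 1 := by simp
      have him : (z - 1).im = z.im := by simp
      rw [hre, him] at h1
      nlinarith
    have hc : ContinuousAt (fun s => ((f s / f ((n : ℝ) * δ) : Circle) : ℂ)) t := by
      exact ((hf.continuous.div' continuous_const).subtype_val).continuousAt
    exact (continuousAt_const.add continuousAt_const).add
      (ContinuousAt.comp (x := t) (f := fun s => ((f s / f ((n : ℝ) * δ) : Circle) : ℂ))
        (Complex.continuousAt_arg hz) hc)
  have hFG : ∀ (n : ℤ) (t : ℝ),
      t ∈ Set.Icc ((n : ℝ) * δ) (((n : ℝ) + 1) * δ) → F t = G n t := by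
    rintro n t ⟨h1, h2⟩
    rcases lt_or_eq_of_le h2 with hlt | heq
    · rw [hF]
      simp only []
      rw [hNeq n t h1 hlt]
    · have hNt : N t = n + 1 := by
        apply hNeq
        · push_cast; linarith
        · push_cast
          nlinarith
      rw [hF]
      simp only []
      rw [hNt, hG]
      simp only []
      have e1 : f t / f (((n + 1 : ℤ) : ℝ) * δ) = 1 := by
        rw [heq]
        push_cast
        exact div_self' _
      have e2 : ((n + 1 : ℤ) : ℝ) = (n : ℝ) + 1 := by push_cast; ring
      rw [e1, hSstep n]
      have e3 : Complex.arg ((1 : Circle) : ℂ) = 0 := by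
        rw [Circle.coe_one, Complex.arg_one]
      rw [e3, ha]
      simp only []
      rw [← heq]
      ring
  refine ⟨F, ?_, hlift⟩
  rw [continuous_iff_continuousAt]
  intro t₀
  have hb1 : ((N t₀ : ℝ)) * δ ≤ t₀ := hNle t₀
  have hb2 : t₀ < ((N t₀ : ℝ) + 1) * δ := hNlt t₀
  rcases eq_or_lt_of_le hb1 with heq | hlt
  · -- boundary point : t₀ = (N t₀) * δ
    rw [continuousAt_iff_continuous_left_right]
    constructor
    · -- left-continuity via G (N t₀ - 1)
      have hGc : ContinuousAt (G (N t₀ - 1)) t₀ := by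
        apply hGcont
        push_cast
        rw [abs_le]
        constructor <;> nlinarith [heq]
      refine hGc.continuousWithinAt.congr_of_eventuallyEq ?_ ?_
      · apply Filter.eventuallyEq_of_mem
          (Icc_mem_nhdsLE (show ((N t₀ - 1 : ℤ) : ℝ) * δ < t₀ by push_cast; nlinarith))
        intro t ht
        apply hFG
        refine ⟨ht.1, ?_⟩
        have : ((N t₀ - 1 : ℤ) : ℝ) + 1 = (N t₀ : ℝ) := by push_cast; ring
        rw [this, heq]
        exact ht.2
      · apply hFG
        constructor
        · push_cast; nlinarith
        · have : ((N t₀ - 1 : ℤ) : ℝ) + 1 = (N t₀ : ℝ) := by push_cast; ring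
          rw [this]
          linarith
    · -- right-continuity via G (N t₀)
      have hGc : ContinuousAt (G (N t₀)) t₀ := by
        apply hGcont
        rw [abs_le]
        constructor <;> nlinarith [heq]
      refine hGc.continuousWithinAt.congr_of_eventuallyEq ?_ ?_
      · apply Filter.eventuallyEq_of_mem
          (Icc_mem_nhdsGE (show t₀ < ((N t₀ : ℝ) + 1) * δ from hb2))
        intro t ht
        apply hFG
        exact ⟨heq.le.trans ht.1, ht.2⟩
      · apply hFG
        exact ⟨hb1, hb2.le⟩
  · have habs : |t₀ - ((N t₀ : ℝ)) * δ| ≤ δ := by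
      rw [abs_le]
      constructor
      · linarith
      · nlinarith [hb2]
    refine (hGcont (N t₀) t₀ habs).congr ?_
    apply Filter.eventuallyEq_of_mem (Ioo_mem_nhds hlt hb2)
    intro t ht
    exact (hFG (N t₀) t (Set.Ioo_subset_Icc_self ht)).symm

end Lift


lemma iter_per {F : ℝ → ℝ} {c : ℝ} (h : ∀ t, F (t + 2 * π) = F t + c) :
    ∀ (k : ℤ) (t : ℝ), F (t + k * (2 * π)) = F t + k * c := by
  intro k
  induction k using Int.induction_on with
  | zero => simp
  | succ k ih =>
    intro t
    push_cast
    push_cast at ih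
    rw [show t + ((k : ℝ) + 1) * (2 * π) = (t + (k : ℝ) * (2 * π)) + 2 * π by ring, h, ih]
    ring
  | pred k ih =>
    intro t
    push_cast
    push_cast at ih
    have hh := h (t + (-(k : ℝ) - 1) * (2 * π))
    rw [show t + (-(k : ℝ) - 1) * (2 * π) + 2 * π = t + -(k : ℝ) * (2 * π) by ring] at hh
    rw [ih] at hh
    linarith

lemma mono_or_anti {F : ℝ → ℝ} (hc : Continuous F) (hi : Function.Injective F) :
    StrictMono F ∨ StrictAnti F := by
  rcases (hi.ne (show (0:ℝ) ≠ 1 by norm_num)).lt_or_gt with h | h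
  · left
    exact hc.strictMonoOn_of_inj_rigidity hi one_pos
      (ContinuousOn.strictMonoOn_of_injOn_Icc zero_le_one h.le hc.continuousOn (hi.injOn))
  · right
    have hneg : StrictMono (fun t => -(F t)) := by
      have hc' : Continuous fun t => -(F t) := hc.neg
      have hi' : Function.Injective fun t => -(F t) := fun s t hst => hi (by simpa using hst)
      exact hc'.strictMonoOn_of_inj_rigidity hi' one_pos
        (ContinuousOn.strictMonoOn_of_injOn_Icc zero_le_one (by simpa using h.le)
          hc'.continuousOn hi'.injOn)
    intro s t hst
    have := hneg hst
    simpa using this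

/-- Lift data for a circle homeomorphism. -/
lemma exists_liftData (g : Circle ≃ₜ Circle) :
    ∃ (F : ℝ → ℝ) (σ : ℝ), Continuous F ∧ (∀ t, Circle.exp (F t) = g (Circle.exp t)) ∧
      (σ = 1 ∨ σ = -1) ∧ StrictMono (fun t => σ * F t) ∧
      (∀ t, F (t + 2 * π) = F t + σ * (2 * π)) := by
  have hpi := Real.pi_pos
  have huc : ∀ (e : Circle ≃ₜ Circle), UniformContinuous (fun t => e (Circle.exp t)) := by
    intro e
    exact (CompactSpace.uniformContinuous_of_continuous e.continuous).comp
      uniformContinuous_circleExp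
  obtain ⟨F, hFc, hFl⟩ := exists_lift (huc g)
  obtain ⟨F', hF'c, hF'l⟩ := exists_lift (huc g.symm)
  -- F' ∘ F is a translation
  have hFF' : ∀ t, F' (F t) = t + (F' (F 0) - 0) := by
    intro t
    have key := const_of_int (d := fun t => F' (F t) - t)
      ((hF'c.comp hFc).sub continuous_id) (fun t => by
        have : Circle.exp (F' (F t)) = Circle.exp t := by
          rw [hF'l, hFl, Homeomorph.symm_apply_apply]
        obtain ⟨m, hm⟩ := Circle.exp_eq_exp.mp this
        exact ⟨m, show F' (F t) - t = _ by linarith [hm]⟩) t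
    linarith [key]
  have hFinj : Function.Injective F := by
    intro s t hst
    have h1 := hFF' s
    have h2 := hFF' t
    rw [hst] at h1
    linarith [h1, h2]
  -- periods
  have hper : ∃ m : ℤ, ∀ t, F (t + 2 * π) = F t + m * (2 * π) := by
    have hmem : ∀ t, ∃ m : ℤ, F (t + 2 * π) - F t = m * (2 * π) := by
      intro t
      have : Circle.exp (F (t + 2 * π)) = Circle.exp (F t) := by
        rw [hFl, hFl, Circle.periodic_exp]
      obtain ⟨m, hm⟩ := Circle.exp_eq_exp.mp this
      exact ⟨m, by linarith [hm]⟩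
    obtain ⟨m, hm⟩ := hmem 0
    simp only [zero_add] at hm
    refine ⟨m, fun t => ?_⟩
    have hconst := const_of_int (d := fun t => F (t + 2 * π) - F t)
      ((hFc.comp (continuous_id.add continuous_const)).sub hFc) hmem t
    rw [zero_add] at hconst
    linarith [hm, hconst]
  have hper' : ∃ m : ℤ, ∀ t, F' (t + 2 * π) = F' t + m * (2 * π) := by
    have hmem : ∀ t, ∃ m : ℤ, F' (t + 2 * π) - F' t = m * (2 * π) := by
      intro t
      have : Circle.exp (F' (t + 2 * π)) = Circle.exp (F' t) := by
        rw [hF'l, hF'l, Circle.periodic_exp]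
      obtain ⟨m, hm⟩ := Circle.exp_eq_exp.mp this
      exact ⟨m, by linarith [hm]⟩
    obtain ⟨m, hm⟩ := hmem 0
    simp only [zero_add] at hm
    refine ⟨m, fun t => ?_⟩
    have hconst := const_of_int (d := fun t => F' (t + 2 * π) - F' t)
      ((hF'c.comp (continuous_id.add continuous_const)).sub hF'c) hmem t
    rw [zero_add] at hconst
    linarith [hm, hconst]
  obtain ⟨m, hm⟩ := hper
  obtain ⟨m', hm'⟩ := hper'
  -- m * m' = 1
  have hmm' : m * m' = 1 := by
    have h1 : F' (F 0 + (m : ℝ) * (2 * π)) = F' (F 0) + (m : ℝ) * (m' : ℝ) * (2 * π) := by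
      have := iter_per hm' m (F 0)
      rw [this]
      push_cast; ring
    have h2 : F' (F (0 + 2 * π)) = (0 + 2 * π) + (F' (F 0) - 0) := hFF' (0 + 2 * π)
    rw [hm 0] at h2
    rw [h1] at h2
    have : (m : ℝ) * (m' : ℝ) * (2 * π) = 2 * π := by linarith [h2]
    have h3 : ((m * m' : ℤ) : ℝ) = 1 := by
      push_cast
      nlinarith [this, hpi]
    exact_mod_cast h3
  have hm1 : m = 1 ∨ m = -1 :=
    (Int.mul_eq_one_iff_eq_one_or_neg_one.mp hmm').imp (fun h => h.1) (fun h => h.1)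
  -- dichotomy
  rcases mono_or_anti hFc hFinj with hmono | hanti
  · refine ⟨F, 1, hFc, hFl, Or.inl rfl, by simpa using hmono, fun t => ?_⟩
    have : m = 1 := by
      rcases hm1 with h | h
      · exact h
      · exfalso
        have := hm 0
        rw [h] at this
        push_cast at this
        have h2 : F 0 < F (0 + 2 * π) := hmono (by linarith)
        linarith
    rw [hm t, this]
    push_cast; ring
  · refine ⟨F, -1, hFc, hFl, Or.inr rfl, ?_, fun t => ?_⟩
    · intro s t hst
      have := hanti hst
      simp only []
      nlinarith [this]
    · have : m = -1 := by
        rcases hm1 with h | h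
        · exfalso
          have := hm 0
          rw [h] at this
          push_cast at this
          have h2 : F (0 + 2 * π) < F 0 := hanti (by linarith)
          linarith
        · exact h
      rw [hm t, this]
      push_cast; ring

lemma surj_of_per {H : ℝ → ℝ} (hc : Continuous H)
    (hper : ∀ t, H (t + 2 * π) = H t + 2 * π) : Function.Surjective H := by
  have hpi := Real.pi_pos
  intro y
  obtain ⟨k, hk⟩ := exists_nat_ge (|y - H 0| / (2 * π))
  have hk' : |y - H 0| ≤ (k : ℝ) * (2 * π) := by
    rw [div_le_iff₀ (by positivity)] at hk
    linarith
  have h1 : H (0 + (-(k : ℤ) : ℤ) * (2 * π)) = H 0 - (k : ℝ) * (2 * π) := by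
    rw [iter_per hper]
    push_cast
    ring
  have h2 : H (0 + ((k : ℤ) : ℤ) * (2 * π)) = H 0 + (k : ℝ) * (2 * π) := by
    rw [iter_per hper]
    push_cast
    ring
  rw [abs_le] at hk'
  have hmem : y ∈ Set.Icc (H (0 + (-(k : ℤ) : ℤ) * (2 * π))) (H (0 + ((k : ℤ) : ℤ) * (2 * π))) := by
    rw [h1, h2]
    constructor <;> linarith [hk'.1, hk'.2]
  have hle : (0 + ((-(k : ℤ) : ℤ) : ℝ) * (2 * π)) ≤ (0 + (((k : ℤ) : ℤ) : ℝ) * (2 * π)) := by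
    push_cast
    nlinarith [hpi]
  obtain ⟨t, _, ht⟩ := intermediate_value_Icc hle hc.continuousOn hmem
  exact ⟨t, ht⟩

/-- Descend a strictly monotone periodic-type real map to a circle homeomorphism. -/
lemma exists_circle_homeo {H : ℝ → ℝ} (hc : Continuous H) (hm : StrictMono H)
    (hper : ∀ t, H (t + 2 * π) = H t + 2 * π) :
    ∃ h : Circle ≃ₜ Circle, (∀ t, h (Circle.exp t) = Circle.exp (H t)) ∧
      (∀ t, h.symm (Circle.exp (H t)) = Circle.exp t) := by
  have hsurj := surj_of_per hc hper
  let E : ℝ ≃o ℝ := StrictMono.orderIsoOfSurjective H hm hsurj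
  set H' : ℝ → ℝ := fun t => E.symm t with hH'
  have hEH : ∀ t, E t = H t := fun t => rfl
  have hH'H : ∀ t, H' (H t) = t := by
    intro t
    rw [hH', ← hEH]
    exact E.symm_apply_apply t
  have hHH' : ∀ t, H (H' t) = t := by
    intro t
    rw [← hEH]
    exact E.apply_symm_apply t
  have hH'c : Continuous H' := (OrderIso.toHomeomorph E).symm.continuous
  have hH'per : ∀ t, H' (t + 2 * π) = H' t + 2 * π := by
    intro t
    apply hm.injective
    rw [hHH', hper, hHH']
  -- descend to the circle
  have hper1 : Function.Periodic (fun t => Circle.exp (H t)) (2 * π) := by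
    intro t
    simp only [hper]
    exact Circle.periodic_exp (H t)
  have hper2 : Function.Periodic (fun t => Circle.exp (H' t)) (2 * π) := by
    intro t
    simp only [hH'per]
    exact Circle.periodic_exp (H' t)
  have hsymm_exp : ∀ t : ℝ, (AddCircle.homeomorphCircle').symm (Circle.exp t)
      = (t : AddCircle (2 * π)) := by
    intro t
    rw [← AddCircle.homeomorphCircle'_apply_mk]
    exact Homeomorph.symm_apply_apply _ _
  let c1 : Circle → Circle := hper1.lift ∘ (AddCircle.homeomorphCircle').symm
  let c2 : Circle → Circle := hper2.lift ∘ (AddCircle.homeomorphCircle').symm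
  have hc1 : ∀ t, c1 (Circle.exp t) = Circle.exp (H t) := by
    intro t
    show hper1.lift ((AddCircle.homeomorphCircle').symm (Circle.exp t)) = _
    rw [hsymm_exp]
    exact Function.Periodic.lift_coe hper1 t
  have hc2 : ∀ t, c2 (Circle.exp t) = Circle.exp (H' t) := by
    intro t
    show hper2.lift ((AddCircle.homeomorphCircle').symm (Circle.exp t)) = _
    rw [hsymm_exp]
    exact Function.Periodic.lift_coe hper2 t
  have hc1c : Continuous c1 := by
    apply Continuous.comp _ (AddCircle.homeomorphCircle').symm.continuous
    exact continuous_coinduced_dom.mpr (Circle.exp.continuous.comp hc)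
  have hc2c : Continuous c2 := by
    apply Continuous.comp _ (AddCircle.homeomorphCircle').symm.continuous
    exact continuous_coinduced_dom.mpr (Circle.exp.continuous.comp hH'c)
  have hsurj_exp : ∀ x : Circle, ∃ t, Circle.exp t = x := fun x => ⟨_, Circle.exp_arg x⟩
  refine ⟨⟨⟨c1, c2, ?_, ?_⟩, hc1c, hc2c⟩, fun t => hc1 t, fun t => ?_⟩
  · intro x
    obtain ⟨t, rfl⟩ := hsurj_exp x
    show c2 (c1 (Circle.exp t)) = Circle.exp t
    rw [hc1, hc2, hH'H]
  · intro x
    obtain ⟨t, rfl⟩ := hsurj_exp x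
    show c1 (c2 (Circle.exp t)) = Circle.exp t
    rw [hc2, hc1, hHH']
  · show c2 (Circle.exp (H t)) = Circle.exp t
    rw [hc2, hH'H]

lemma isometry_rot (a : Circle) : Isometry (fun x : Circle => a * x) := by
  apply Isometry.of_dist_eq
  intro x y
  rw [circle_dist_eq, circle_dist_eq, Circle.coe_mul, Circle.coe_mul, Complex.dist_eq,
    Complex.dist_eq, ← mul_sub, norm_mul, Circle.norm_coe, one_mul]

lemma isometry_refl (a : Circle) : Isometry (fun x : Circle => a * x⁻¹) := by
  apply Isometry.of_dist_eq
  intro x y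
  rw [circle_dist_eq, circle_dist_eq, Circle.coe_mul, Circle.coe_mul, Complex.dist_eq,
    Complex.dist_eq, ← mul_sub, norm_mul, Circle.norm_coe, one_mul, Circle.coe_inv, Circle.coe_inv]
  have hx := Circle.coe_ne_zero x
  have hy := Circle.coe_ne_zero y
  have : (x : ℂ)⁻¹ - (y : ℂ)⁻¹ = ((y : ℂ) - (x : ℂ)) / ((x : ℂ) * (y : ℂ)) := by
    field_simp
  rw [this, norm_div, norm_mul, Circle.norm_coe, Circle.norm_coe, one_mul, div_one,
    norm_sub_rev]

/-- The group of self-homeomorphisms of the circle under composition. -/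
noncomputable instance : Group (Circle ≃ₜ Circle) where
  mul f g := g.trans f
  one := Homeomorph.refl _
  inv := Homeomorph.symm
  mul_assoc _ _ _ := Homeomorph.ext fun _ => rfl
  one_mul _ := Homeomorph.ext fun _ => rfl
  mul_one _ := Homeomorph.ext fun _ => rfl
  inv_mul_cancel := Homeomorph.self_trans_symm

theorem stmt_4 (G : Subgroup (Circle ≃ₜ Circle)) (hG : Finite G) :
    ∃ h : Circle ≃ₜ Circle, ∀ g ∈ G,
      Isometry (fun x : Circle => h (g (h.symm x))) := by
  classical
  have hpi := Real.pi_pos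
  haveI : Fintype ↥G := Fintype.ofFinite ↥G
  choose F σ hFc hFl hσ hmono hper using fun g : ↥G => exists_liftData (g : Circle ≃ₜ Circle)
  have mul_apply : ∀ (f g : Circle ≃ₜ Circle) (x : Circle), (f * g) x = f (g x) := fun _ _ _ => rfl
  have hσsq : ∀ g : ↥G, σ g * σ g = 1 := by
    intro g; rcases hσ g with h | h <;> rw [h] <;> norm_num
  -- cocycle constants
  have hco : ∀ a b : ↥G, ∃ c : ℝ, ∀ t, F a (F b t) = F (a * b) t + c := by
    intro a b
    refine ⟨F a (F b 0) - F (a * b) 0, fun t => ?_⟩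
    have key := const_of_int (d := fun t => F a (F b t) - F (a * b) t)
      (((hFc a).comp (hFc b)).sub (hFc (a * b))) (fun t => by
        have h1 : Circle.exp (F a (F b t)) = Circle.exp (F (a * b) t) := by
          rw [hFl, hFl, hFl, Subgroup.coe_mul, mul_apply]
        obtain ⟨m, hm⟩ := Circle.exp_eq_exp.mp h1
        exact ⟨m, show F a (F b t) - F (a * b) t = _ by linarith⟩) t
    linarith [key]
  choose co hco using hco
  -- multiplicativity of the sign
  have hσmul : ∀ a b : ↥G, σ (a * b) = σ a * σ b := by
    intro a b
    have hmono_ab : StrictMono (fun t => (σ a * σ b) * F (a * b) t) := by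
      have he : (fun t => (σ a * σ b) * F (a * b) t)
          = fun t => σ a * σ b * (F a (F b t) - co a b) := by
        funext t
        rw [show F (a * b) t = F a (F b t) - co a b by linarith [hco a b t]]
      rw [he]
      rcases hσ b with hb | hb
      · have hFb : StrictMono (F b) := by
          have hmb := hmono b
          rw [hb] at hmb
          intro s t hst
          have := hmb hst
          dsimp only at this
          linarith
        intro s t hst
        have h3 := (hmono a) (hFb hst)
        dsimp only at h3 ⊢
        rw [hb]
        nlinarith [h3]
      · have hFb : StrictAnti (F b) := by
          have hmb := hmono b
          rw [hb] at hmb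
          intro s t hst
          have h2 := hmb hst
          dsimp only at h2
          linarith
        intro s t hst
        have h3 := (hmono a) (hFb hst)
        dsimp only at h3 ⊢
        rw [hb]
        nlinarith [h3]
    have key : σ (a * b) = σ a * σ b ∨ σ (a * b) = -(σ a * σ b) := by
      rcases hσ (a * b) with hab | hab <;> rcases hσ a with ha | ha <;>
        rcases hσ b with hb | hb <;> rw [hab, ha, hb] <;> norm_num
    rcases key with h | h
    · exact h
    · exfalso
      have c1 : σ (a * b) * F (a * b) 0 < σ (a * b) * F (a * b) 1 := hmono (a * b) zero_lt_one
      have c2 : (σ a * σ b) * F (a * b) 0 < (σ a * σ b) * F (a * b) 1 := hmono_ab zero_lt_one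
      rw [h] at c1
      have hs : σ a * σ b = 1 ∨ σ a * σ b = -1 := by
        rcases hσ a with ha | ha <;> rcases hσ b with hb | hb <;> rw [ha, hb] <;> norm_num
      rcases hs with hs | hs <;> rw [hs] at c1 c2 <;> nlinarith [c1, c2]
  -- the averaged map
  set n : ℕ := Fintype.card ↥G with hn
  haveI : Nonempty ↥G := ⟨1⟩
  have hnpos : 0 < n := Fintype.card_pos
  have hnR : 0 < (n : ℝ) := by exact_mod_cast hnpos
  set Hf : ℝ → ℝ := fun t => (∑ g : ↥G, σ g * F g t) / n with hHf
  have hHc : Continuous Hf :=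
    (continuous_finset_sum _ fun g _ => continuous_const.mul (hFc g)).div_const n
  have hHm : StrictMono Hf := by
    intro s t hst
    have hsum : (∑ g : ↥G, σ g * F g s) < ∑ g : ↥G, σ g * F g t := by
      apply Finset.sum_lt_sum_of_nonempty Finset.univ_nonempty
      intro g _
      have := (hmono g) hst
      dsimp only at this
      exact this
    exact (div_lt_div_iff_of_pos_right hnR).mpr hsum
  have hHper : ∀ t, Hf (t + 2 * π) = Hf t + 2 * π := by
    intro t
    have hsum : ∑ g : ↥G, σ g * F g (t + 2 * π)
        = (∑ g : ↥G, σ g * F g t) + (n : ℝ) * (2 * π) := by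
      calc ∑ g : ↥G, σ g * F g (t + 2 * π) = ∑ g : ↥G, (σ g * F g t + 2 * π) := by
            apply Finset.sum_congr rfl
            intro g _
            rw [hper g t, mul_add, ← mul_assoc, hσsq g, one_mul]
      _ = (∑ g : ↥G, σ g * F g t) + (n : ℝ) * (2 * π) := by
            rw [Finset.sum_add_distrib, Finset.sum_const, Finset.card_univ, nsmul_eq_mul, ← hn]
    show (∑ g : ↥G, σ g * F g (t + 2 * π)) / (n : ℝ) = (∑ g : ↥G, σ g * F g t) / (n : ℝ) + 2 * π
    rw [hsum, add_div, mul_div_cancel_left₀ _ (ne_of_gt hnR)]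
  -- conjugation relation
  have hconj : ∀ b : ↥G, ∃ C : ℝ, ∀ t, Hf (F b t) = σ b * Hf t + C := by
    intro b
    refine ⟨(∑ a : ↥G, σ a * co a b) / n, fun t => ?_⟩
    have e1 : ∑ a : ↥G, σ a * F a (F b t) = ∑ a : ↥G, (σ a * F (a * b) t + σ a * co a b) := by
      apply Finset.sum_congr rfl
      intro a _
      rw [hco a b t]
      ring
    have e2 : ∑ a : ↥G, σ a * F (a * b) t = σ b * ∑ a : ↥G, σ a * F a t := by
      rw [Finset.mul_sum]
      apply Fintype.sum_equiv (Equiv.mulRight b)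
      intro a
      simp only [Equiv.coe_mulRight]
      rw [hσmul a b]
      linear_combination (-(σ a * F (a * b) t)) * hσsq b
    show (∑ a : ↥G, σ a * F a (F b t)) / (n : ℝ)
        = σ b * ((∑ g : ↥G, σ g * F g t) / (n : ℝ)) + (∑ a : ↥G, σ a * co a b) / n
    rw [e1, Finset.sum_add_distrib, e2, add_div, mul_div_assoc]
  -- build the homeomorphism
  obtain ⟨h, hhom, hsymm⟩ := exists_circle_homeo hHc hHm hHper
  have hsurjH := surj_of_per hHc hHper
  refine ⟨h, fun g hg => ?_⟩
  set b : ↥G := ⟨g, hg⟩ with hbdef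
  obtain ⟨C, hC⟩ := hconj b
  have hgb : ∀ x : Circle, g x = (b : Circle ≃ₜ Circle) x := fun _ => rfl
  rcases hσ b with hs | hs
  · have he : (fun x : Circle => h (g (h.symm x))) = fun x => Circle.exp C * x := by
      funext x
      obtain ⟨u, hu⟩ : ∃ u, Circle.exp u = x := ⟨_, Circle.exp_arg x⟩
      obtain ⟨s, hsu⟩ := hsurjH u
      rw [← hu, ← hsu, hsymm s, hgb, ← hFl b s, hhom (F b s), hC s, hs, one_mul, add_comm,
        Circle.exp_add]
    rw [he]
    exact isometry_rot _
  · have he : (fun x : Circle => h (g (h.symm x))) = fun x => Circle.exp C * x⁻¹ := by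
      funext x
      obtain ⟨u, hu⟩ : ∃ u, Circle.exp u = x := ⟨_, Circle.exp_arg x⟩
      obtain ⟨s, hsu⟩ := hsurjH u
      rw [← hu, ← hsu, hsymm s, hgb, ← hFl b s, hhom (F b s), hC s, hs,
        show (-1 : ℝ) * Hf s + C = C + -(Hf s) by ring, Circle.exp_add, Circle.exp_neg]
    rw [he]
    exact isometry_refl _
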